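/- For 0 < a^β < a < 1 with β > 1, the Moser-Carleson-Chang tower μ_C on the interval C = [a^β, a] satisfies ‖∇μ_C‖₂² = 1 + (log β)/4. -/

import Mathlib

open Real MeasureTheory Set

/-- The Moser-Carleson-Chang tower on the interval `C = [a^β, a]`:
`μ_C(r) = √(β log(1/a)/(2π))` for `r ≤ a^β`, `μ_C(r) = √(log(1/r)/(2π))` for
`a^β ≤ r ≤ a`, and `μ_C(r) = log(1/r)/√(2π log(1/a))` for `a ≤ r ≤ 1`. -/
noncomputable def towerInterval (a β : ℝ) : ℝ → ℝ := fun r =>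
  (1 / Real.sqrt (2 * π)) *
    min (Real.sqrt (β * Real.log a⁻¹))
      (min (Real.sqrt (Real.log r⁻¹)) (Real.log r⁻¹ / Real.sqrt (Real.log a⁻¹)))

/-- For `a ∈ (0,1)` and `β > 1` (so `0 < a^β < a < 1`), the tower on `C = [a^β, a]`
satisfies `‖∇μ_C‖₂² = 2π ∫_0^1 μ_C'(r)² r dr = 1 + (log β)/4`. -/
theorem towerInterval_energy (a β : ℝ) (ha0 : 0 < a) (ha1 : a < 1) (hβ : 1 < β) :
    2 * π * ∫ r in (0:ℝ)..1, (deriv (towerInterval a β) r) ^ 2 * r =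
      1 + Real.log β / 4 := by
  have hπ : (0:ℝ) < π := Real.pi_pos
  set c : ℝ := 1 / Real.sqrt (2 * π) with hc
  set L : ℝ := Real.log a⁻¹ with hL
  set b : ℝ := a ^ β with hb
  have hL0 : 0 < L := by
    rw [hL, Real.log_inv]; linarith [Real.log_neg ha0 ha1]
  have hβ0 : (0:ℝ) < β := by linarith
  have hb0 : 0 < b := Real.rpow_pos_of_pos ha0 β
  have hba : b < a := by
    have := Real.rpow_lt_rpow_of_exponent_gt ha0 ha1 hβ
    simpa [Real.rpow_one] using this
  have hlogb : Real.log b⁻¹ = β * L := by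
    rw [Real.log_inv, hb, Real.log_rpow ha0, hL, Real.log_inv]; ring
  have hsL : Real.sqrt L ≠ 0 := (Real.sqrt_pos.mpr hL0).ne'
  -- value of the tower in each of the three regions
  have eq1 : ∀ r ∈ Ioo (0:ℝ) b, towerInterval a β r = c * Real.sqrt (β * L) := by
    intro r hr
    have hr0 : 0 < r := hr.1
    have ht : β * L ≤ Real.log r⁻¹ := by
      rw [← hlogb, Real.log_inv, Real.log_inv]
      have := Real.log_lt_log hr0 hr.2
      linarith
    have h1 : Real.sqrt (β * L) ≤ Real.sqrt (Real.log r⁻¹) := Real.sqrt_le_sqrt ht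
    have htpos : 0 < Real.log r⁻¹ := lt_of_lt_of_le (by positivity) ht
    have h2 : Real.sqrt (β * L) ≤ Real.log r⁻¹ / Real.sqrt L := by
      rw [le_div_iff₀ (Real.sqrt_pos.mpr hL0)]
      calc Real.sqrt (β * L) * Real.sqrt L
          ≤ Real.sqrt (Real.log r⁻¹) * Real.sqrt (Real.log r⁻¹) := by
            apply mul_le_mul h1 _ (Real.sqrt_nonneg _) (Real.sqrt_nonneg _)
            apply Real.sqrt_le_sqrt
            nlinarith
        _ = Real.log r⁻¹ := Real.mul_self_sqrt htpos.le
    rw [towerInterval, ← hc, ← hL, min_eq_left (le_min h1 h2)]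
  have eq2 : ∀ r ∈ Ioo b a, towerInterval a β r = c * Real.sqrt (Real.log r⁻¹) := by
    intro r hr
    have hr0 : 0 < r := lt_trans hb0 hr.1
    have htL : L ≤ Real.log r⁻¹ := by
      rw [hL, Real.log_inv, Real.log_inv]
      have := Real.log_lt_log hr0 hr.2
      linarith
    have htβ : Real.log r⁻¹ ≤ β * L := by
      rw [← hlogb, Real.log_inv, Real.log_inv]
      have := Real.log_lt_log hb0 hr.1
      linarith
    have htpos : 0 < Real.log r⁻¹ := lt_of_lt_of_le hL0 htL
    have h1 : Real.sqrt (Real.log r⁻¹) ≤ Real.sqrt (β * L) := Real.sqrt_le_sqrt htβ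
    have h2 : Real.sqrt (Real.log r⁻¹) ≤ Real.log r⁻¹ / Real.sqrt L := by
      rw [le_div_iff₀ (Real.sqrt_pos.mpr hL0)]
      calc Real.sqrt (Real.log r⁻¹) * Real.sqrt L
          ≤ Real.sqrt (Real.log r⁻¹) * Real.sqrt (Real.log r⁻¹) := by
            apply mul_le_mul_of_nonneg_left (Real.sqrt_le_sqrt htL) (Real.sqrt_nonneg _)
        _ = Real.log r⁻¹ := Real.mul_self_sqrt htpos.le
    rw [towerInterval, ← hc, ← hL, min_eq_left h2, min_eq_right h1]
  have eq3 : ∀ r ∈ Ioo a 1, towerInterval a β r = c * (Real.log r⁻¹ / Real.sqrt L) := by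
    intro r hr
    have hr0 : 0 < r := lt_trans ha0 hr.1
    have ht0 : 0 ≤ Real.log r⁻¹ := by
      rw [Real.log_inv]
      have := Real.log_nonpos hr0.le hr.2.le
      linarith
    have htL : Real.log r⁻¹ ≤ L := by
      rw [hL, Real.log_inv, Real.log_inv]
      have := Real.log_lt_log ha0 hr.1
      linarith
    have h2 : Real.log r⁻¹ / Real.sqrt L ≤ Real.sqrt (Real.log r⁻¹) := by
      rw [div_le_iff₀ (Real.sqrt_pos.mpr hL0)]
      calc Real.log r⁻¹ = Real.sqrt (Real.log r⁻¹) * Real.sqrt (Real.log r⁻¹) :=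
            (Real.mul_self_sqrt ht0).symm
        _ ≤ Real.sqrt (Real.log r⁻¹) * Real.sqrt L := by
            apply mul_le_mul_of_nonneg_left (Real.sqrt_le_sqrt htL) (Real.sqrt_nonneg _)
    have h1 : Real.log r⁻¹ / Real.sqrt L ≤ Real.sqrt (β * L) := by
      calc Real.log r⁻¹ / Real.sqrt L ≤ L / Real.sqrt L := by gcongr
        _ ≤ Real.sqrt (β * L) := by
            rw [Real.div_sqrt]
            apply Real.sqrt_le_sqrt; nlinarith
    rw [towerInterval, ← hc, ← hL, min_eq_right h2, min_eq_right h1]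
  -- derivative of log r⁻¹
  have hlogder : ∀ r : ℝ, 0 < r → HasDerivAt (fun y => Real.log y⁻¹) (-r⁻¹) r := by
    intro r hr0
    have h := (Real.hasDerivAt_log hr0.ne').neg
    simp only [Real.log_inv]
    exact h
  -- derivative of the tower in each region
  have d1 : ∀ r ∈ Ioo (0:ℝ) b, deriv (towerInterval a β) r = 0 := by
    intro r hr
    have hev : towerInterval a β =ᶠ[nhds r] (fun _ => c * Real.sqrt (β * L)) := by
      filter_upwards [isOpen_Ioo.mem_nhds hr] with y hy
      exact eq1 y hy
    rw [hev.deriv_eq, deriv_const]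
  have d2 : ∀ r ∈ Ioo b a, deriv (towerInterval a β) r
      = c * (-r⁻¹ / (2 * Real.sqrt (Real.log r⁻¹))) := by
    intro r hr
    have hr0 : 0 < r := lt_trans hb0 hr.1
    have htpos : 0 < Real.log r⁻¹ := by
      rw [Real.log_inv]
      have := Real.log_lt_log hr0 hr.2
      have h2 := Real.log_neg ha0 ha1
      linarith
    have hev : towerInterval a β =ᶠ[nhds r]
        (fun y => c * Real.sqrt (Real.log y⁻¹)) := by
      filter_upwards [isOpen_Ioo.mem_nhds hr] with y hy
      exact eq2 y hy
    rw [hev.deriv_eq]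
    exact (((hlogder r hr0).sqrt htpos.ne').const_mul c).deriv
  have d3 : ∀ r ∈ Ioo a 1, deriv (towerInterval a β) r = c * (-r⁻¹ / Real.sqrt L) := by
    intro r hr
    have hr0 : 0 < r := lt_trans ha0 hr.1
    have hev : towerInterval a β =ᶠ[nhds r]
        (fun y => c * (Real.log y⁻¹ / Real.sqrt L)) := by
      filter_upwards [isOpen_Ioo.mem_nhds hr] with y hy
      exact eq3 y hy
    rw [hev.deriv_eq]
    exact (((hlogder r hr0).div_const (Real.sqrt L)).const_mul c).deriv
  -- the explicit integrand
  set g : ℝ → ℝ := fun r =>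
    if r ≤ b then 0 else if r ≤ a then c ^ 2 / (4 * (r * Real.log r⁻¹))
    else c ^ 2 / (r * L) with hg
  have hc2 : c ^ 2 = 1 / (2 * π) := by
    rw [hc, div_pow, one_pow, Real.sq_sqrt (by positivity)]
  have heq : ∀ r ∈ Ioo (0:ℝ) 1, r ≠ b → r ≠ a →
      (deriv (towerInterval a β) r) ^ 2 * r = g r := by
    intro r hr hrb hra
    rcases lt_trichotomy r b with h | h | h
    · rw [d1 r ⟨hr.1, h⟩, hg]
      simp [h.le]
    · exact absurd h hrb
    · rcases lt_trichotomy r a with h' | h' | h'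
      · have htpos : 0 < Real.log r⁻¹ := by
          rw [Real.log_inv]
          have := Real.log_lt_log (lt_trans hb0 h) h'
          have h2 := Real.log_neg ha0 ha1
          linarith
        have hr0 : 0 < r := lt_trans hb0 h
        rw [d2 r ⟨h, h'⟩, hg]
        simp only [not_le.mpr h, if_false, h'.le, if_true]
        have hs : Real.sqrt (Real.log r⁻¹) ^ 2 = Real.log r⁻¹ :=
          Real.sq_sqrt htpos.le
        have h2 : (r⁻¹) ^ 2 * r = r⁻¹ := by
          field_simp
        calc (c * (-r⁻¹ / (2 * Real.sqrt (Real.log r⁻¹)))) ^ 2 * r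
            = c ^ 2 * ((r⁻¹) ^ 2 * r) / (4 * Real.sqrt (Real.log r⁻¹) ^ 2) := by
              ring
          _ = c ^ 2 * r⁻¹ / (4 * Real.log r⁻¹) := by rw [hs, h2]
          _ = c ^ 2 / (4 * (r * Real.log r⁻¹)) := by
              rw [div_eq_div_iff (by positivity) (by positivity)]
              field_simp
      · exact absurd h' hra
      · have hr0 : 0 < r := lt_trans hb0 h
        rw [d3 r ⟨h', hr.2⟩, hg]
        simp only [not_le.mpr h, if_false, not_le.mpr h', if_false]
        have hs : Real.sqrt L ^ 2 = L := Real.sq_sqrt hL0.le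
        have h2 : (r⁻¹) ^ 2 * r = r⁻¹ := by
          field_simp
        calc (c * (-r⁻¹ / Real.sqrt L)) ^ 2 * r
            = c ^ 2 * ((r⁻¹) ^ 2 * r) / Real.sqrt L ^ 2 := by ring
          _ = c ^ 2 * r⁻¹ / L := by rw [hs, h2]
          _ = c ^ 2 / (r * L) := by
              rw [div_eq_div_iff (by positivity) (by positivity)]
              field_simp
  -- replace the integrand by g
  have hnull : ∀ᵐ x : ℝ, x ∉ ({b, a, 1} : Set ℝ) := by
    have h0 : volume ({b, a, 1} : Set ℝ) = 0 :=
      (Set.to_countable _).measure_zero _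
    exact (MeasureTheory.measure_eq_zero_iff_ae_notMem).mp h0
  have hstep1 : (∫ r in (0:ℝ)..1, (deriv (towerInterval a β) r) ^ 2 * r)
      = ∫ r in (0:ℝ)..1, g r := by
    apply intervalIntegral.integral_congr_ae
    filter_upwards [hnull] with x hx hmem
    rw [Set.uIoc_of_le (by norm_num : (0:ℝ) ≤ 1)] at hmem
    have hx1 : x ≠ 1 := fun h => hx (by simp [h])
    have hxb : x ≠ b := fun h => hx (by simp [h])
    have hxa : x ≠ a := fun h => hx (by simp [h])
    exact heq x ⟨hmem.1, lt_of_le_of_ne hmem.2 hx1⟩ hxb hxa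
  -- the three explicit pieces
  set φ₂ : ℝ → ℝ := fun r => c ^ 2 / (4 * (r * Real.log r⁻¹)) with hφ₂
  set φ₃ : ℝ → ℝ := fun r => c ^ 2 / (r * L) with hφ₃
  have hgeq2 : EqOn g φ₂ (Ioc b a) := by
    intro x hx
    rw [hg, hφ₂]
    simp [not_le.mpr hx.1, hx.2]
  have hgeq3 : EqOn g φ₃ (Ioc a 1) := by
    intro x hx
    rw [hg, hφ₃]
    simp [not_le.mpr (lt_trans hba hx.1), not_le.mpr hx.1]
  have hφ₂cont : ContinuousOn φ₂ (Icc b a) := by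
    apply ContinuousOn.div continuousOn_const
    · apply ContinuousOn.mul continuousOn_const
      apply ContinuousOn.mul continuousOn_id
      apply ContinuousOn.log
      · exact ContinuousOn.inv₀ continuousOn_id
          (fun x hx => (lt_of_lt_of_le hb0 hx.1).ne')
      · intro x hx
        exact inv_ne_zero (lt_of_lt_of_le hb0 hx.1).ne'
    · intro x hx
      have hx0 : 0 < x := lt_of_lt_of_le hb0 hx.1
      have ht : 0 < Real.log x⁻¹ := by
        rw [Real.log_inv]
        have := Real.log_neg hx0 (lt_of_le_of_lt hx.2 ha1)
        linarith
      positivity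
  have hφ₃cont : ContinuousOn φ₃ (Icc a 1) := by
    apply ContinuousOn.div continuousOn_const
    · exact ContinuousOn.mul continuousOn_id continuousOn_const
    · intro x hx
      have hx0 : 0 < x := lt_of_lt_of_le ha0 hx.1
      positivity
  -- interval integrability of g on the three pieces
  have int1 : IntervalIntegrable g volume 0 b := by
    rw [intervalIntegrable_iff, Set.uIoc_of_le hb0.le]
    apply (integrableOn_congr_fun (g := fun _ => (0:ℝ)) ?_ measurableSet_Ioc).mpr
    · exact integrableOn_zero
    · intro x hx
      rw [hg]
      simp [hx.2]
  have int2 : IntervalIntegrable g volume b a := by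
    rw [intervalIntegrable_iff, Set.uIoc_of_le hba.le]
    apply (integrableOn_congr_fun hgeq2 measurableSet_Ioc).mpr
    have := (hφ₂cont.mono ((Set.uIcc_of_le hba.le).subset)).intervalIntegrable (μ := volume)
    rw [intervalIntegrable_iff, Set.uIoc_of_le hba.le] at this
    exact this
  have int3 : IntervalIntegrable g volume a 1 := by
    rw [intervalIntegrable_iff, Set.uIoc_of_le ha1.le]
    apply (integrableOn_congr_fun hgeq3 measurableSet_Ioc).mpr
    have := (hφ₃cont.mono ((Set.uIcc_of_le ha1.le).subset)).intervalIntegrable (μ := volume)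
    rw [intervalIntegrable_iff, Set.uIoc_of_le ha1.le] at this
    exact this
  -- split the integral
  have hsplit : (∫ r in (0:ℝ)..1, g r)
      = (∫ r in (0:ℝ)..b, g r) + (∫ r in b..a, g r) + (∫ r in a..(1:ℝ), g r) := by
    rw [intervalIntegral.integral_add_adjacent_intervals int1 int2,
      intervalIntegral.integral_add_adjacent_intervals (int1.trans int2) int3]
  -- evaluate the three pieces
  have hnullb : ∀ᵐ x : ℝ, x ≠ b := by
    have h0 : volume ({b} : Set ℝ) = 0 := measure_singleton b
    filter_upwards [(MeasureTheory.measure_eq_zero_iff_ae_notMem).mp h0] with x hx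
    simpa using hx
  have hnulla : ∀ᵐ x : ℝ, x ≠ a := by
    have h0 : volume ({a} : Set ℝ) = 0 := measure_singleton a
    filter_upwards [(MeasureTheory.measure_eq_zero_iff_ae_notMem).mp h0] with x hx
    simpa using hx
  have E1 : (∫ r in (0:ℝ)..b, g r) = 0 := by
    have h : (∫ r in (0:ℝ)..b, g r) = ∫ r in (0:ℝ)..b, (0:ℝ) := by
      apply intervalIntegral.integral_congr
      intro x hx
      rw [Set.uIcc_of_le hb0.le] at hx
      rw [hg]
      simp [hx.2]
    rw [h]
    simp
  have E2 : (∫ r in b..a, g r) = c ^ 2 / 4 * Real.log β := by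
    have hcongr : (∫ r in b..a, g r) = ∫ r in b..a, φ₂ r := by
      apply intervalIntegral.integral_congr_ae
      filter_upwards [hnullb] with x hx hmem
      rw [Set.uIoc_of_le hba.le] at hmem
      exact hgeq2 hmem
    rw [hcongr]
    have hftc : (∫ r in b..a, φ₂ r)
        = (-(c ^ 2 / 4) * Real.log (Real.log a⁻¹))
          - (-(c ^ 2 / 4) * Real.log (Real.log b⁻¹)) := by
      apply intervalIntegral.integral_eq_sub_of_hasDerivAt
        (f := fun x => -(c ^ 2 / 4) * Real.log (Real.log x⁻¹))
      · intro x hx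
        rw [Set.uIcc_of_le hba.le] at hx
        have hx0 : 0 < x := lt_of_lt_of_le hb0 hx.1
        have ht : 0 < Real.log x⁻¹ := by
          rw [Real.log_inv]
          have := Real.log_neg hx0 (lt_of_le_of_lt hx.2 ha1)
          linarith
        have h := (((hlogder x hx0).log ht.ne').const_mul (-(c ^ 2 / 4)))
        refine h.congr_deriv ?_
        rw [hφ₂]
        field_simp
      · exact (hφ₂cont.mono ((Set.uIcc_of_le hba.le).subset)).intervalIntegrable (μ := volume)
    rw [hftc, hlogb, ← hL]
    rw [Real.log_mul hβ0.ne' hL0.ne']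
    ring
  have E3 : (∫ r in a..(1:ℝ), g r) = c ^ 2 := by
    have hcongr : (∫ r in a..(1:ℝ), g r) = ∫ r in a..(1:ℝ), φ₃ r := by
      apply intervalIntegral.integral_congr_ae
      filter_upwards [hnulla] with x hx hmem
      rw [Set.uIoc_of_le ha1.le] at hmem
      exact hgeq3 hmem
    rw [hcongr]
    have hftc : (∫ r in a..(1:ℝ), φ₃ r)
        = (c ^ 2 / L * Real.log 1) - (c ^ 2 / L * Real.log a) := by
      apply intervalIntegral.integral_eq_sub_of_hasDerivAt
        (f := fun x => c ^ 2 / L * Real.log x)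
      · intro x hx
        rw [Set.uIcc_of_le ha1.le] at hx
        have hx0 : 0 < x := lt_of_lt_of_le ha0 hx.1
        have h := ((Real.hasDerivAt_log hx0.ne').const_mul (c ^ 2 / L))
        refine h.congr_deriv ?_
        rw [hφ₃]
        field_simp
      · exact (hφ₃cont.mono ((Set.uIcc_of_le ha1.le).subset)).intervalIntegrable (μ := volume)
    rw [hftc, Real.log_one]
    have : Real.log a = -L := by rw [hL, Real.log_inv]; ring
    rw [this]
    field_simp
    ring
  rw [hstep1, hsplit, E1, E2, E3, hc2]
  field_simp
  ring
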